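/- Let σ be an involution of {1,…,n}, let R be an n⁴ complex array of real type II with respect to σ, and let R′ be an n⁴ complex array of real type II or of antireal type II with respect to σ. Let * be the star structure on the braided covector algebra V̌(R′,R) with x_i* = x_{σ(i)}, and let B be the braided tensor square of V̌(R′,R). Then: (i) there is a (necessarily unique) conjugate-linear, antimultiplicative, unital involution θ of B with θ(x_i) = y_{σ(i)} and θ(y_i) = x_{σ(i)} for all i; (ii) every ℂ-algebra homomorphism Δ: V̌(R′,R) → B with Δ(x_i) = x_i + y_i for all i satisfies Δ(a*) = θ(Δ(a)) for all a ∈ V̌(R′,R). -/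
import Mathlib


open scoped ComplexConjugate

noncomputable section

/-- An n⁴ array `R^i{}_j{}^k{}_l` viewed as an n²×n² matrix with row index `(i,k)`,
column index `(j,l)`. -/
def toMat (n : ℕ) (R : Fin n → Fin n → Fin n → Fin n → ℂ) :
    Matrix (Fin n × Fin n) (Fin n × Fin n) ℂ :=
  Matrix.of fun p q => R p.1 q.1 p.2 q.2

/-- Entries `(R⁻¹)^i{}_j{}^k{}_l` of the matrix inverse of `R`. -/
def invEntry (n : ℕ) (R : Fin n → Fin n → Fin n → Fin n → ℂ)
    (i j k l : Fin n) : ℂ :=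
  (toMat n R)⁻¹ (i, k) (j, l)

/-- `R` is of real type I: `conj (R^i{}_j{}^k{}_l) = R^l{}_k{}^j{}_i`. -/
def RealTypeI (n : ℕ) (R : Fin n → Fin n → Fin n → Fin n → ℂ) : Prop :=
  ∀ i j k l, conj (R i j k l) = R l k j i

/-- `R` is of antireal type I: `R` invertible and
`conj (R^i{}_j{}^k{}_l) = (R⁻¹)^j{}_i{}^l{}_k`. -/
def AntirealTypeI (n : ℕ) (R : Fin n → Fin n → Fin n → Fin n → ℂ) : Prop :=
  IsUnit (toMat n R) ∧ ∀ i j k l, conj (R i j k l) = invEntry n R j i l k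

/-- `R` is of real type II w.r.t. the involution `σ`:
`conj (R^i{}_j{}^k{}_l) = R^{σk}{}_{σl}{}^{σi}{}_{σj}`. -/
def RealTypeII (n : ℕ) (R : Fin n → Fin n → Fin n → Fin n → ℂ)
    (σ : Fin n → Fin n) : Prop :=
  ∀ i j k l, conj (R i j k l) = R (σ k) (σ l) (σ i) (σ j)

/-- `R` is of antireal type II w.r.t. the involution `σ`: `R` invertible and
`conj (R^i{}_j{}^k{}_l) = (R⁻¹)^{σi}{}_{σj}{}^{σk}{}_{σl}`. -/
def AntirealTypeII (n : ℕ) (R : Fin n → Fin n → Fin n → Fin n → ℂ)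
    (σ : Fin n → Fin n) : Prop :=
  IsUnit (toMat n R) ∧
    ∀ i j k l, conj (R i j k l) = invEntry n R (σ i) (σ j) (σ k) (σ l)

/-- The metric `η` (entries `η^{ij} = η i j`) is `R`-covariant:
`Σ η^{ia} η^{jb} R^k{}_a{}^l{}_b = Σ R^i{}_a{}^j{}_b η^{ak} η^{bl}`. -/
def MetricCovariant (n : ℕ) (R : Fin n → Fin n → Fin n → Fin n → ℂ)
    (η : Matrix (Fin n) (Fin n) ℂ) : Prop :=
  ∀ i j k l, (∑ a : Fin n, ∑ b : Fin n, η i a * η j b * R k a l b) =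
    ∑ a : Fin n, ∑ b : Fin n, R i a j b * η a k * η b l

/-- The metric `η` is real: `conj (η^{ij}) = η_{ji}`, where the lower-index entries
`η_{ij}` are those of the transposed inverse, i.e. `η_{ji} = (η⁻¹) i j`. -/
def MetricReal (n : ℕ) (η : Matrix (Fin n) (Fin n) ℂ) : Prop :=
  ∀ i j, conj (η i j) = η⁻¹ i j

/-- The relations `x_i x_j = Σ_{a,b} R'^a{}_i{}^b{}_j x_b x_a` of the braided
covector algebra, as a relation on the free algebra. -/
inductive CovRel (n : ℕ) (R' : Fin n → Fin n → Fin n → Fin n → ℂ) :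
    FreeAlgebra ℂ (Fin n) → FreeAlgebra ℂ (Fin n) → Prop
  | rel (i j : Fin n) :
      CovRel n R' (FreeAlgebra.ι ℂ i * FreeAlgebra.ι ℂ j)
        (∑ a : Fin n, ∑ b : Fin n,
          R' a i b j • (FreeAlgebra.ι ℂ b * FreeAlgebra.ι ℂ a))

/-- The braided covector algebra `V̌(R',R)`: the free algebra on `x_1,…,x_n` modulo
the two-sided ideal generated by `x_i x_j − Σ R'^a{}_i{}^b{}_j x_b x_a`. -/
abbrev CovAlg (n : ℕ) (R' : Fin n → Fin n → Fin n → Fin n → ℂ) :=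
  RingQuot (CovRel n R')

/-- The generator `x_i` of the braided covector algebra. -/
def xg (n : ℕ) (R' : Fin n → Fin n → Fin n → Fin n → ℂ) (i : Fin n) :
    CovAlg n R' :=
  RingQuot.mkAlgHom ℂ (CovRel n R') (FreeAlgebra.ι ℂ i)

/-- The relations `v^i v^j = Σ_{a,b} R'^i{}_a{}^j{}_b v^b v^a` of the braided
vector algebra, as a relation on the free algebra. -/
inductive VecRel (n : ℕ) (R' : Fin n → Fin n → Fin n → Fin n → ℂ) :
    FreeAlgebra ℂ (Fin n) → FreeAlgebra ℂ (Fin n) → Prop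
  | rel (i j : Fin n) :
      VecRel n R' (FreeAlgebra.ι ℂ i * FreeAlgebra.ι ℂ j)
        (∑ a : Fin n, ∑ b : Fin n,
          R' i a j b • (FreeAlgebra.ι ℂ b * FreeAlgebra.ι ℂ a))

/-- The braided vector algebra `V(R',R)`: the free algebra on `v^1,…,v^n` modulo
the two-sided ideal generated by `v^i v^j − Σ R'^i{}_a{}^j{}_b v^b v^a`. -/
abbrev VecAlg (n : ℕ) (R' : Fin n → Fin n → Fin n → Fin n → ℂ) :=
  RingQuot (VecRel n R')

/-- The generator `v^i` of the braided vector algebra. -/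
def vg (n : ℕ) (R' : Fin n → Fin n → Fin n → Fin n → ℂ) (i : Fin n) :
    VecAlg n R' :=
  RingQuot.mkAlgHom ℂ (VecRel n R') (FreeAlgebra.ι ℂ i)

/-- The relations of the braided tensor square of the braided covector algebra:
generators `x_i = ι (inl i)`, `y_i = ι (inr i)`, with `x`- and `y`-relations from
`R'` and cross relations `y_i x_j = Σ_{a,b} R^a{}_i{}^b{}_j x_b y_a`. -/
inductive SqRel (n : ℕ) (R' R : Fin n → Fin n → Fin n → Fin n → ℂ) :
    FreeAlgebra ℂ (Fin n ⊕ Fin n) → FreeAlgebra ℂ (Fin n ⊕ Fin n) → Prop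
  | xx (i j : Fin n) :
      SqRel n R' R (FreeAlgebra.ι ℂ (Sum.inl i) * FreeAlgebra.ι ℂ (Sum.inl j))
        (∑ a : Fin n, ∑ b : Fin n, R' a i b j •
          (FreeAlgebra.ι ℂ (Sum.inl b) * FreeAlgebra.ι ℂ (Sum.inl a)))
  | yy (i j : Fin n) :
      SqRel n R' R (FreeAlgebra.ι ℂ (Sum.inr i) * FreeAlgebra.ι ℂ (Sum.inr j))
        (∑ a : Fin n, ∑ b : Fin n, R' a i b j •
          (FreeAlgebra.ι ℂ (Sum.inr b) * FreeAlgebra.ι ℂ (Sum.inr a)))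
  | yx (i j : Fin n) :
      SqRel n R' R (FreeAlgebra.ι ℂ (Sum.inr i) * FreeAlgebra.ι ℂ (Sum.inl j))
        (∑ a : Fin n, ∑ b : Fin n, R a i b j •
          (FreeAlgebra.ι ℂ (Sum.inl b) * FreeAlgebra.ι ℂ (Sum.inr a)))

/-- The braided tensor square `B` of the braided covector algebra. -/
abbrev SqAlg (n : ℕ) (R' R : Fin n → Fin n → Fin n → Fin n → ℂ) :=
  RingQuot (SqRel n R' R)

/-- The generator `x_i` of the braided tensor square. -/
def Xg (n : ℕ) (R' R : Fin n → Fin n → Fin n → Fin n → ℂ) (i : Fin n) :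
    SqAlg n R' R :=
  RingQuot.mkAlgHom ℂ (SqRel n R' R) (FreeAlgebra.ι ℂ (Sum.inl i))

/-- The generator `y_i` of the braided tensor square. -/
def Yg (n : ℕ) (R' R : Fin n → Fin n → Fin n → Fin n → ℂ) (i : Fin n) :
    SqAlg n R' R :=
  RingQuot.mkAlgHom ℂ (SqRel n R' R) (FreeAlgebra.ι ℂ (Sum.inr i))

/-- A conjugate-linear, antimultiplicative, unital map between ℂ-algebras. -/
def IsConjLinearAntiHom {A B : Type*} [Semiring A] [Algebra ℂ A]
    [Semiring B] [Algebra ℂ B] (f : A → B) : Prop :=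
  (∀ a b : A, f (a + b) = f a + f b) ∧
  (∀ (c : ℂ) (a : A), f (c • a) = (starRingEnd ℂ) c • f a) ∧
  (∀ a b : A, f (a * b) = f b * f a) ∧
  f 1 = 1

/-- A star structure on a ℂ-algebra: a conjugate-linear, antimultiplicative,
unital, involutive map. -/
def IsStarStructure {A : Type*} [Semiring A] [Algebra ℂ A] (f : A → A) : Prop :=
  (∀ a b : A, f (a + b) = f a + f b) ∧
  (∀ (c : ℂ) (a : A), f (c • a) = (starRingEnd ℂ) c • f a) ∧
  (∀ a b : A, f (a * b) = f b * f a) ∧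
  f 1 = 1 ∧
  (∀ a : A, f (f a) = a)


namespace Stmt6Aux

open MulOpposite

variable (n : ℕ) (σ : Fin n → Fin n) (R R' : Fin n → Fin n → Fin n → Fin n → ℂ)

/-- Swap the two copies of `Fin n` and apply `σ`. -/
def esw : Fin n ⊕ Fin n → Fin n ⊕ Fin n :=
  Sum.elim (fun i => Sum.inr (σ i)) (fun i => Sum.inl (σ i))

lemma esw_esw (hσ : Function.Involutive σ) (s : Fin n ⊕ Fin n) :
    esw n σ (esw n σ s) = s := by
  cases s <;> simp [esw, hσ _]

/-- The ring hom from the free algebra to the opposite of the braided tensor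
square, conjugate-linear with respect to the standard algebra structures. -/
def ThetaHom : FreeAlgebra ℂ (Fin n ⊕ Fin n) →+* (SqAlg n R' R)ᵐᵒᵖ :=
  letI : Algebra ℂ (SqAlg n R' R)ᵐᵒᵖ :=
    RingHom.toAlgebra' ((algebraMap ℂ (SqAlg n R' R)ᵐᵒᵖ).comp (starRingEnd ℂ))
      (fun c x => by
        rw [RingHom.comp_apply]
        exact (Algebra.commutes (starRingEnd ℂ c) x))
  (FreeAlgebra.lift ℂ
    (fun s => MulOpposite.op
      (RingQuot.mkAlgHom ℂ (SqRel n R' R) (FreeAlgebra.ι ℂ (esw n σ s))))).toRingHom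

lemma ThetaHom_ι (s : Fin n ⊕ Fin n) :
    ThetaHom n σ R R' (FreeAlgebra.ι ℂ s) =
      MulOpposite.op (RingQuot.mkAlgHom ℂ (SqRel n R' R)
        (FreeAlgebra.ι ℂ (esw n σ s))) := by
  simp [ThetaHom]

lemma ThetaHom_algebraMap (c : ℂ) :
    ThetaHom n σ R R' (algebraMap ℂ _ c) =
      MulOpposite.op (algebraMap ℂ (SqAlg n R' R) (conj c)) := by
  letI : Algebra ℂ (SqAlg n R' R)ᵐᵒᵖ :=
    RingHom.toAlgebra' ((algebraMap ℂ (SqAlg n R' R)ᵐᵒᵖ).comp (starRingEnd ℂ))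
      (fun c x => by
        rw [RingHom.comp_apply]
        exact (Algebra.commutes (starRingEnd ℂ c) x))
  have h := (FreeAlgebra.lift ℂ
    (fun s => MulOpposite.op
      (RingQuot.mkAlgHom ℂ (SqRel n R' R)
        (FreeAlgebra.ι ℂ (esw n σ s))))).commutes c
  have h2 : (algebraMap ℂ (SqAlg n R' R)ᵐᵒᵖ) c =
      MulOpposite.op (algebraMap ℂ (SqAlg n R' R) (conj c)) := by
    rw [RingHom.algebraMap_toAlgebra']
    rfl
  exact h.trans h2

lemma ThetaHom_smul (c : ℂ) (x : FreeAlgebra ℂ (Fin n ⊕ Fin n)) :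
    ThetaHom n σ R R' (c • x) =
      MulOpposite.op (conj c • (ThetaHom n σ R R' x).unop) := by
  rw [Algebra.smul_def, map_mul, ThetaHom_algebraMap,
      ← MulOpposite.op_unop (ThetaHom n σ R R' x), ← MulOpposite.op_mul,
      MulOpposite.unop_op]
  congr 1
  rw [← Algebra.commutes, ← Algebra.smul_def]

section Key

variable {n σ R R'}

lemma reidx (hσ : Function.Involutive σ) (F : Fin n → SqAlg n R' R) :
    (∑ a : Fin n, F (σ a)) = ∑ a : Fin n, F a :=
  Fintype.sum_bijective σ hσ.bijective _ _ (fun _ => rfl)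

/-- Key computation for the cross relation (real type II). -/
lemma key_cross (hσ : Function.Involutive σ)
    (M : Fin n → Fin n → Fin n → Fin n → ℂ) (hM : RealTypeII n M σ)
    (X Y : Fin n → SqAlg n R' R)
    (hrel : ∀ p q, Y p * X q = ∑ a : Fin n, ∑ b : Fin n, M a p b q • (X b * Y a))
    (i j : Fin n) :
    Y (σ j) * X (σ i) =
      ∑ a : Fin n, ∑ b : Fin n, conj (M a i b j) • (X (σ a) * Y (σ b)) := by
  have h1 : ∀ a b : Fin n, conj (M a i b j) = M (σ b) (σ j) (σ a) (σ i) :=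
    fun a b => hM a i b j
  simp only [h1]
  have h2 : (∑ a : Fin n, ∑ b : Fin n,
      M (σ b) (σ j) (σ a) (σ i) • (X (σ a) * Y (σ b))) =
      ∑ a : Fin n, ∑ b : Fin n, M b (σ j) a (σ i) • (X a * Y b) := by
    rw [reidx hσ (fun a => ∑ b : Fin n, M (σ b) (σ j) a (σ i) • (X a * Y (σ b)))]
    exact Finset.sum_congr rfl fun a _ =>
      reidx hσ (fun b => M b (σ j) a (σ i) • (X a * Y b))
  rw [h2, hrel (σ j) (σ i)]
  exact Finset.sum_comm

/-- Key computation for a diagonal relation, real or antireal type II. -/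
lemma key_diag (hσ : Function.Involutive σ)
    (M : Fin n → Fin n → Fin n → Fin n → ℂ)
    (hM : RealTypeII n M σ ∨ AntirealTypeII n M σ)
    (Y : Fin n → SqAlg n R' R)
    (hrel : ∀ p q, Y p * Y q = ∑ a : Fin n, ∑ b : Fin n, M a p b q • (Y b * Y a))
    (i j : Fin n) :
    Y (σ j) * Y (σ i) =
      ∑ a : Fin n, ∑ b : Fin n, conj (M a i b j) • (Y (σ a) * Y (σ b)) := by
  rcases hM with hM | hM
  · exact key_cross hσ M hM Y Y hrel i j
  · obtain ⟨hU, hinv⟩ := hM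
    have h1 : ∀ a b, conj (M a i b j) =
        (toMat n M)⁻¹ (σ a, σ b) (σ i, σ j) := fun a b => hinv a i b j
    simp only [h1]
    have h2 : (∑ a : Fin n, ∑ b : Fin n,
        (toMat n M)⁻¹ (σ a, σ b) (σ i, σ j) • (Y (σ a) * Y (σ b))) =
        ∑ a : Fin n, ∑ b : Fin n,
          (toMat n M)⁻¹ (a, b) (σ i, σ j) • (Y a * Y b) := by
      rw [reidx hσ (fun a => ∑ b : Fin n,
        (toMat n M)⁻¹ (a, σ b) (σ i, σ j) • (Y a * Y (σ b)))]
      exact Finset.sum_congr rfl fun a _ =>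
        reidx hσ (fun b => (toMat n M)⁻¹ (a, b) (σ i, σ j) • (Y a * Y b))
    rw [h2]
    -- convert to a sum over the product type
    rw [← Fintype.sum_prod_type
      (f := fun u : Fin n × Fin n =>
        (toMat n M)⁻¹ u (σ i, σ j) • (Y u.1 * Y u.2))]
    have h3 : ∀ u : Fin n × Fin n, Y u.1 * Y u.2 =
        ∑ v : Fin n × Fin n, toMat n M v u • (Y v.2 * Y v.1) := by
      intro u
      rw [hrel u.1 u.2, Fintype.sum_prod_type]
      rfl
    simp only [h3]
    have h4 : (∑ u : Fin n × Fin n, (toMat n M)⁻¹ u (σ i, σ j) •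
        ∑ v : Fin n × Fin n, toMat n M v u • (Y v.2 * Y v.1)) =
        ∑ v : Fin n × Fin n,
          ((toMat n M * (toMat n M)⁻¹) v (σ i, σ j)) • (Y v.2 * Y v.1) := by
      simp only [Finset.smul_sum, smul_smul]
      rw [Finset.sum_comm]
      refine Finset.sum_congr rfl fun v _ => ?_
      rw [Matrix.mul_apply, Finset.sum_smul]
      exact Finset.sum_congr rfl fun u _ => by rw [mul_comm]
    rw [h4, Matrix.mul_nonsing_inv _ ((Matrix.isUnit_iff_isUnit_det _).mp hU)]
    have h5 : ∀ v : Fin n × Fin n,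
        (1 : Matrix (Fin n × Fin n) (Fin n × Fin n) ℂ) v (σ i, σ j) •
          (Y v.2 * Y v.1) =
        if v = (σ i, σ j) then Y v.2 * Y v.1 else 0 := by
      intro v
      rw [Matrix.one_apply]
      split_ifs with h
      · exact one_smul _ _
      · exact zero_smul _ _
    simp only [h5]
    rw [Finset.sum_ite_eq' Finset.univ ((σ i, σ j) : Fin n × Fin n)
      (fun v => Y v.2 * Y v.1)]
    simp

end Key

end Stmt6Aux

/-- for `σ` an involution, `R` real type II and `R'` real or antireal
type II (all w.r.t. `σ`), and `*` the star structure on `V̌(R',R)` with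
`x_i* = x_{σ(i)}`: (i) the braided tensor square `B` admits a unique
conjugate-linear antimultiplicative unital involution `θ` with `θ(x_i) = y_{σ(i)}`,
`θ(y_i) = x_{σ(i)}`; (ii) every ℂ-algebra map `Δ : V̌(R',R) → B` with
`Δ(x_i) = x_i + y_i` satisfies `Δ(a*) = θ(Δ(a))`. -/
theorem stmt6 (n : ℕ) (hn : 1 ≤ n)
    (σ : Fin n → Fin n) (hσ : Function.Involutive σ)
    (R R' : Fin n → Fin n → Fin n → Fin n → ℂ)
    (hR : RealTypeII n R σ)
    (hR' : RealTypeII n R' σ ∨ AntirealTypeII n R' σ)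
    (f : CovAlg n R' → CovAlg n R')
    (hf : IsStarStructure f)
    (hfgen : ∀ i : Fin n, f (xg n R' i) = xg n R' (σ i)) :
    ∃! θ : SqAlg n R' R → SqAlg n R' R,
      (IsStarStructure θ ∧
        (∀ i : Fin n, θ (Xg n R' R i) = Yg n R' R (σ i)) ∧
        (∀ i : Fin n, θ (Yg n R' R i) = Xg n R' R (σ i))) ∧
      ∀ Δ : CovAlg n R' →ₐ[ℂ] SqAlg n R' R,
        (∀ i : Fin n, Δ (xg n R' i) = Xg n R' R i + Yg n R' R i) →
        ∀ a : CovAlg n R', Δ (f a) = θ (Δ a) := by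
  classical
  -- notation
  set π : FreeAlgebra ℂ (Fin n ⊕ Fin n) →ₐ[ℂ] SqAlg n R' R :=
    RingQuot.mkAlgHom ℂ (SqRel n R' R) with hπdef
  -- relations in the quotient
  have relXX : ∀ i j, Xg n R' R i * Xg n R' R j =
      ∑ a : Fin n, ∑ b : Fin n, R' a i b j • (Xg n R' R b * Xg n R' R a) := by
    intro i j
    have h := RingQuot.mkAlgHom_rel ℂ (SqRel.xx (n := n) (R' := R') (R := R) i j)
    simpa [Xg, map_sum, map_mul] using h
  have relYY : ∀ i j, Yg n R' R i * Yg n R' R j =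
      ∑ a : Fin n, ∑ b : Fin n, R' a i b j • (Yg n R' R b * Yg n R' R a) := by
    intro i j
    have h := RingQuot.mkAlgHom_rel ℂ (SqRel.yy (n := n) (R' := R') (R := R) i j)
    simpa [Yg, map_sum, map_mul] using h
  have relYX : ∀ i j, Yg n R' R i * Xg n R' R j =
      ∑ a : Fin n, ∑ b : Fin n, R a i b j • (Xg n R' R b * Yg n R' R a) := by
    intro i j
    have h := RingQuot.mkAlgHom_rel ℂ (SqRel.yx (n := n) (R' := R') (R := R) i j)
    simpa [Xg, Yg, map_sum, map_mul] using h
  -- compatibility of ThetaHom with the relations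
  have hcompat : ∀ ⦃a b⦄, SqRel n R' R a b →
      Stmt6Aux.ThetaHom n σ R R' a = Stmt6Aux.ThetaHom n σ R R' b := by
    intro a b h
    cases h with
    | xx i j =>
        rw [map_mul, map_sum]
        simp only [map_sum, Stmt6Aux.ThetaHom_smul, map_mul, Stmt6Aux.ThetaHom_ι]
        simp only [Stmt6Aux.esw, Sum.elim_inl, ← MulOpposite.op_mul,
          MulOpposite.unop_op, ← Finset.op_sum, MulOpposite.op_inj]
        exact (Stmt6Aux.key_diag hσ R' hR' (Yg n R' R) relYY i j : _)
    | yy i j =>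
        rw [map_mul, map_sum]
        simp only [map_sum, Stmt6Aux.ThetaHom_smul, map_mul, Stmt6Aux.ThetaHom_ι]
        simp only [Stmt6Aux.esw, Sum.elim_inr, ← MulOpposite.op_mul,
          MulOpposite.unop_op, ← Finset.op_sum, MulOpposite.op_inj]
        exact (Stmt6Aux.key_diag hσ R' hR' (Xg n R' R) relXX i j : _)
    | yx i j =>
        rw [map_mul, map_sum]
        simp only [map_sum, Stmt6Aux.ThetaHom_smul, map_mul, Stmt6Aux.ThetaHom_ι]
        simp only [Stmt6Aux.esw, Sum.elim_inl, Sum.elim_inr,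
          ← MulOpposite.op_mul, MulOpposite.unop_op, ← Finset.op_sum,
          MulOpposite.op_inj]
        exact (Stmt6Aux.key_cross hσ R hR (Xg n R' R) (Yg n R' R) relYX i j : _)
  -- the lifted map
  set Θ : SqAlg n R' R →+* (SqAlg n R' R)ᵐᵒᵖ :=
    RingQuot.lift ⟨Stmt6Aux.ThetaHom n σ R R', hcompat⟩ with hΘdef
  set θ : SqAlg n R' R → SqAlg n R' R := fun z => (Θ z).unop with hθdef
  have hsurj := RingQuot.mkAlgHom_surjective ℂ (SqRel n R' R)
  have hθπ : ∀ x, θ (π x) = (Stmt6Aux.ThetaHom n σ R R' x).unop := by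
    intro x
    have h1 : π x = RingQuot.mkRingHom (SqRel n R' R) x := by
      rw [← RingQuot.mkAlgHom_coe ℂ]; rfl
    calc θ (π x) = (Θ (π x)).unop := rfl
      _ = (Θ (RingQuot.mkRingHom (SqRel n R' R) x)).unop := by rw [h1]
      _ = _ := by rw [hΘdef, RingQuot.lift_mkRingHom_apply]
  -- structural properties of θ
  have hadd : ∀ z w, θ (z + w) = θ z + θ w := by
    intro z w
    show (Θ (z + w)).unop = (Θ z).unop + (Θ w).unop
    rw [map_add, MulOpposite.unop_add]
  have hmul : ∀ z w, θ (z * w) = θ w * θ z := by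
    intro z w
    show (Θ (z * w)).unop = (Θ w).unop * (Θ z).unop
    rw [map_mul, MulOpposite.unop_mul]
  have hone : θ 1 = 1 := by
    show (Θ 1).unop = 1
    rw [map_one, MulOpposite.unop_one]
  have hsmul : ∀ (c : ℂ) (z : SqAlg n R' R), θ (c • z) = conj c • θ z := by
    intro c z
    obtain ⟨x, rfl⟩ := hsurj z
    rw [← map_smul, hθπ, hθπ, Stmt6Aux.ThetaHom_smul, MulOpposite.unop_op]
  have halgMap : ∀ c : ℂ, θ (algebraMap ℂ (SqAlg n R' R) c)
      = algebraMap ℂ (SqAlg n R' R) (conj c) := by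
    intro c
    rw [Algebra.algebraMap_eq_smul_one, hsmul, hone]
    rw [Algebra.algebraMap_eq_smul_one]
  have hXgen : ∀ i, θ (Xg n R' R i) = Yg n R' R (σ i) := by
    intro i
    have h1 : Xg n R' R i = π (FreeAlgebra.ι ℂ (Sum.inl i)) := rfl
    rw [h1, hθπ, Stmt6Aux.ThetaHom_ι, MulOpposite.unop_op]
    rfl
  have hYgen : ∀ i, θ (Yg n R' R i) = Xg n R' R (σ i) := by
    intro i
    have h1 : Yg n R' R i = π (FreeAlgebra.ι ℂ (Sum.inr i)) := rfl
    rw [h1, hθπ, Stmt6Aux.ThetaHom_ι, MulOpposite.unop_op]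
    rfl
  have hθι : ∀ s, θ (π (FreeAlgebra.ι ℂ s)) =
      π (FreeAlgebra.ι ℂ (Stmt6Aux.esw n σ s)) := by
    intro s
    rw [hθπ, Stmt6Aux.ThetaHom_ι, MulOpposite.unop_op]
  have hinvol : ∀ z, θ (θ z) = z := by
    intro z
    obtain ⟨x, rfl⟩ := hsurj z
    induction x using FreeAlgebra.induction with
    | grade0 c =>
        rw [AlgHom.commutes, halgMap, halgMap, Complex.conj_conj]
    | grade1 s =>
        rw [hθι, hθι, Stmt6Aux.esw_esw n σ hσ]
    | mul x y ihx ihy =>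
        rw [map_mul, hmul, hmul, ihx, ihy]
    | add x y ihx ihy =>
        rw [map_add, hadd, hadd, ihx, ihy]
  refine ⟨θ, ⟨⟨⟨hadd, hsmul, hmul, hone, hinvol⟩, hXgen, hYgen⟩, ?_⟩, ?_⟩
  · -- part (ii)
    intro Δ hΔ a
    obtain ⟨u, rfl⟩ := RingQuot.mkAlgHom_surjective ℂ (CovRel n R') a
    obtain ⟨fadd, fsmul, fmul, fone, -⟩ := hf
    induction u using FreeAlgebra.induction with
    | grade0 c =>
        have h1 : RingQuot.mkAlgHom ℂ (CovRel n R') (algebraMap ℂ _ c)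
            = algebraMap ℂ (CovAlg n R') c :=
          (RingQuot.mkAlgHom ℂ (CovRel n R')).commutes c
        have h2 : f (algebraMap ℂ (CovAlg n R') c)
            = algebraMap ℂ (CovAlg n R') (conj c) := by
          rw [Algebra.algebraMap_eq_smul_one, fsmul, fone]
          rw [Algebra.algebraMap_eq_smul_one]
        rw [h1, h2, Δ.commutes, Δ.commutes, halgMap]
    | grade1 i =>
        have h1 : RingQuot.mkAlgHom ℂ (CovRel n R') (FreeAlgebra.ι ℂ i)
            = xg n R' i := rfl
        rw [h1, hfgen, hΔ, hΔ, hadd, hXgen, hYgen, add_comm]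
    | mul x y ihx ihy =>
        rw [map_mul, fmul, map_mul, map_mul, ihx, ihy, ← hmul]
    | add x y ihx ihy =>
        rw [map_add, fadd, map_add, map_add, ihx, ihy, ← hadd]
  · -- uniqueness
    rintro θ₂ ⟨⟨⟨hadd₂, hsmul₂, hmul₂, hone₂, -⟩, hX₂, hY₂⟩, -⟩
    funext z
    obtain ⟨x, rfl⟩ := hsurj z
    induction x using FreeAlgebra.induction with
    | grade0 c =>
        have h2 : θ₂ (algebraMap ℂ (SqAlg n R' R) c)
            = algebraMap ℂ (SqAlg n R' R) (conj c) := by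
          rw [Algebra.algebraMap_eq_smul_one, hsmul₂, hone₂]
          rw [Algebra.algebraMap_eq_smul_one]
        rw [AlgHom.commutes, h2, halgMap]
    | grade1 s =>
        cases s with
        | inl i =>
            have h1 : π (FreeAlgebra.ι ℂ (Sum.inl i)) = Xg n R' R i := rfl
            rw [h1, hX₂, hXgen]
        | inr i =>
            have h1 : π (FreeAlgebra.ι ℂ (Sum.inr i)) = Yg n R' R i := rfl
            rw [h1, hY₂, hYgen]
    | mul x y ihx ihy =>
        rw [map_mul, hmul₂, hmul, ihx, ihy]
    | add x y ihx ihy =>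
        rw [map_add, hadd₂, hadd, ihx, ihy]
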